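/- Let n ≥ 2 be an integer, m ≥ 1, and let h : ℝ → Mat_{m×m}(ℝ) be C² near 0 with det h(0) > 0, h'(0) = −2L, and h''(0) = −2W + 2·L·h(0)⁻¹·L for matrices L, W. Set H := tr(h(0)⁻¹L), σ := tr((h(0)⁻¹L)²), σ̊ := σ − H²/n. Let ρ̄ and R be real numbers satisfying the Gauss-equation identity tr(h(0)⁻¹W) = (1/2)(ρ̄ − R − σ + H²). Let φ be a C² real-valued function near 0 with φ(0) = −H/(2n) and φ'(0) = (1/(3(n−1)))·[((1−n)/(2n))·(ρ̄ + H²) + (1/2)·(R − σ̊)]. Then the function G(r) := (1 + r·φ(r))^{−(n+1)} · √(det h(r)/det h(0)) satisfies (1/2)·G''(0) = ((n−5)/(12(n−1)))·(R − σ̊) + ((n−2)/(24n²))·((n−3)·H² − 2n·ρ̄). That is, the second singular Yamabe renormalized volume coefficient is v^{(2)} = ((n−5)/(12(n−1)))(R − |L̊|²) + ((n−2)/(24n²))((n−3)H² − 2nR̄); in particular for n = 2, v^{(2)} = (1/4)(|L̊|² − R). -/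

import Mathlib

open Matrix Finset Topology

section Aux
variable {m : ℕ}

lemma trace_adjugate_mul_eq (A B : Matrix (Fin m) (Fin m) ℝ) :
    Matrix.trace (A.adjugate * B) = ∑ k, (A.updateRow k (B k)).det := by
  have hk : ∀ k, (A.updateRow k (B k)).det = ∑ j, A.adjugate j k * B k j := by
    intro k
    rw [← Matrix.cramer_transpose_apply, Matrix.cramer_eq_adjugate_mulVec,
      ← Matrix.adjugate_transpose]
    simp [Matrix.mulVec, dotProduct, Matrix.transpose_apply, mul_comm]
  simp only [hk, Matrix.trace, Matrix.diag, Matrix.mul_apply]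
  rw [Finset.sum_comm]

lemma det_hasDerivAt (f : ℝ → Matrix (Fin m) (Fin m) ℝ) (A' : Matrix (Fin m) (Fin m) ℝ)
    (x : ℝ) (hf : ∀ i j, HasDerivAt (fun t => f t i j) (A' i j) x) :
    HasDerivAt (fun t => (f t).det) (Matrix.trace ((f x).adjugate * A')) x := by
  have hfun : (fun t => (f t).det)
      = fun t => ∑ σ : Equiv.Perm (Fin m),
          ((Equiv.Perm.sign σ : ℤ) : ℝ) * ∏ i, f t (σ i) i := by
    funext t; exact Matrix.det_apply' (f t)
  rw [hfun]
  have hder : HasDerivAt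
      (fun t => ∑ σ : Equiv.Perm (Fin m),
          ((Equiv.Perm.sign σ : ℤ) : ℝ) * ∏ i, f t (σ i) i)
      (∑ σ : Equiv.Perm (Fin m), ((Equiv.Perm.sign σ : ℤ) : ℝ) *
          ∑ i, (∏ j ∈ Finset.univ.erase i, f x (σ j) j) • A' (σ i) i) x := by
    apply HasDerivAt.fun_sum
    intro σ _
    exact (HasDerivAt.fun_finsetProd (fun i _ => hf (σ i) i)).const_mul _
  convert hder using 1
  rw [trace_adjugate_mul_eq]
  have hdet' : ∀ k, ((f x).updateRow k (A' k)).det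
      = ∑ σ : Equiv.Perm (Fin m), ((Equiv.Perm.sign σ : ℤ) : ℝ)
          * ∏ i, ((f x).updateRow k (A' k)) (σ i) i :=
    fun k => Matrix.det_apply' _
  simp only [hdet']
  rw [Finset.sum_comm]
  refine Finset.sum_congr rfl fun σ _ => ?_
  rw [← Finset.mul_sum]
  congr 1
  rw [← Equiv.sum_comp σ (fun k => ∏ i, ((f x).updateRow k (A' k)) (σ i) i)]
  refine Finset.sum_congr rfl fun i _ => ?_
  have hentry : ∀ i', ((f x).updateRow (σ i) (A' (σ i))) (σ i') i'
      = if i' = i then A' (σ i') i' else f x (σ i') i' := by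
    intro i'
    rw [Matrix.updateRow_apply]
    by_cases hc : i' = i
    · subst hc; simp
    · rw [if_neg (fun hcc => hc (σ.injective hcc)), if_neg hc]
  calc (∏ i', ((f x).updateRow (σ i) (A' (σ i))) (σ i') i')
      = ∏ i', (if i' = i then A' (σ i') i' else f x (σ i') i') :=
        Finset.prod_congr rfl fun i' _ => hentry i'
    _ = (if i = i then A' (σ i) i else f x (σ i) i)
        * ∏ i' ∈ Finset.univ.erase i, (if i' = i then A' (σ i') i' else f x (σ i') i') :=
        (Finset.mul_prod_erase Finset.univ _ (Finset.mem_univ i)).symm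
    _ = (∏ j ∈ Finset.univ.erase i, f x (σ j) j) • A' (σ i) i := by
        rw [if_pos rfl, smul_eq_mul, mul_comm]
        congr 1
        refine Finset.prod_congr rfl fun i' hi' => ?_
        rw [if_neg (Finset.ne_of_mem_erase hi')]

end Aux

set_option maxHeartbeats 2000000 in

/-- the second singular Yamabe renormalized volume coefficient:
`v⁽²⁾ = ½ G''(0) = ((n−5)/(12(n−1)))(R − |L̊|²) + ((n−2)/(24n²))((n−3)H² − 2nR̄)`,
where `G(r) = (1 + rφ(r))^{−(n+1)} √(det h(r)/det h(0))`, `h'(0) = −2L`,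
`h''(0) = −2W + 2L h(0)⁻¹ L`, `H = tr(h(0)⁻¹L)`, `σ = tr((h(0)⁻¹L)²)`, `σ̊ = σ − H²/n`,
the Gauss identity `tr(h(0)⁻¹W) = ½(ρ̄ − R − σ + H²)` holds, and `φ(0)`, `φ'(0)` are the
singular Yamabe Taylor coefficients. -/
theorem stmt5 (n : ℕ) (hn : 2 ≤ n) (m : ℕ) (hm : 1 ≤ m)
    (h h' h'' : ℝ → Matrix (Fin m) (Fin m) ℝ)
    (U : Set ℝ) (hUo : IsOpen U) (hU0 : (0 : ℝ) ∈ U)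
    (hd : ∀ r ∈ U, ∀ i j, HasDerivAt (fun t => h t i j) (h' r i j) r)
    (hd' : ∀ r ∈ U, ∀ i j, HasDerivAt (fun t => h' t i j) (h'' r i j) r)
    (hc : ∀ i j, ContinuousOn (fun r => h'' r i j) U)
    (hdet : 0 < (h 0).det)
    (L W : Matrix (Fin m) (Fin m) ℝ)
    (hL : h' 0 = (-2 : ℝ) • L)
    (hW : h'' 0 = (-2 : ℝ) • W + (2 : ℝ) • (L * (h 0)⁻¹ * L))
    (H σ σc : ℝ)
    (hH : H = Matrix.trace ((h 0)⁻¹ * L))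
    (hσ : σ = Matrix.trace (((h 0)⁻¹ * L) ^ 2))
    (hσc : σc = σ - H ^ 2 / n)
    (ρb R : ℝ)
    (hGauss : Matrix.trace ((h 0)⁻¹ * W) = (1 / 2) * (ρb - R - σ + H ^ 2))
    (φ φ' φ'' : ℝ → ℝ)
    (hφd : ∀ r ∈ U, HasDerivAt φ (φ' r) r)
    (hφd' : ∀ r ∈ U, HasDerivAt φ' (φ'' r) r)
    (hφc : ContinuousOn φ'' U)
    (hφ0 : φ 0 = -H / (2 * n))
    (hφ1 : φ' 0 = (1 / (3 * ((n : ℝ) - 1)))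
      * (((1 - (n : ℝ)) / (2 * n)) * (ρb + H ^ 2) + (1 / 2) * (R - σc)))
    (G : ℝ → ℝ)
    (hG : G = fun r => ((1 + r * φ r) ^ (n + 1))⁻¹ * Real.sqrt ((h r).det / (h 0).det)) :
    (1 / 2) * deriv (deriv G) 0
      = (((n : ℝ) - 5) / (12 * ((n : ℝ) - 1))) * (R - σc)
        + (((n : ℝ) - 2) / (24 * (n : ℝ) ^ 2)) * (((n : ℝ) - 3) * H ^ 2 - 2 * n * ρb) := by
  have hdet' : (h 0).det ≠ 0 := ne_of_gt hdet
  have hUnit : IsUnit (h 0).det := isUnit_iff_ne_zero.mpr hdet'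
  have hn0 : (n : ℝ) ≠ 0 := Nat.cast_ne_zero.mpr (by omega)
  have hn2 : (2 : ℝ) ≤ (n : ℝ) := by exact_mod_cast hn
  have hn1 : (n : ℝ) - 1 ≠ 0 := by intro hx; nlinarith
  -- derivative of det on U
  have hDd : ∀ r ∈ U, HasDerivAt (fun t => (h t).det)
      (Matrix.trace ((h r).adjugate * h' r)) r :=
    fun r hr => det_hasDerivAt h (h' r) r (fun i j => hd r hr i j)
  -- derivative of adjugate entries on U (value irrelevant)
  have hAdj : ∀ r ∈ U, ∀ i j, DifferentiableAt ℝ (fun t => (h t).adjugate i j) r := by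
    intro r hr i j
    have hfun : (fun t => (h t).adjugate i j)
        = fun t => ((h t).updateRow j (Pi.single i 1)).det := by
      funext t; exact Matrix.adjugate_apply _ i j
    rw [hfun]
    refine (det_hasDerivAt (fun t => (h t).updateRow j (Pi.single i 1))
      ((h' r).updateRow j 0) r ?_).differentiableAt
    intro a b
    simp only [Matrix.updateRow_apply, Pi.zero_apply]
    split_ifs with hab
    · exact hasDerivAt_const r _
    · exact hd r hr a b
  -- entries of the inverse are differentiable at 0
  have hJent : ∀ i j, (fun r => (h r)⁻¹ i j)
      = fun r => Ring.inverse ((h r).det) * (h r).adjugate i j := by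
    intro i j; funext r
    rw [Matrix.inv_def, Matrix.smul_apply, smul_eq_mul]
  have hJd : ∀ i j, DifferentiableAt ℝ (fun r => (h r)⁻¹ i j) 0 := by
    intro i j
    rw [hJent i j]
    have h1 : DifferentiableAt ℝ (fun r => ((h r).det)⁻¹) 0 :=
      ((hDd 0 hU0).differentiableAt).inv hdet'
    simp only [Ring.inverse_eq_inv]
    exact h1.mul (hAdj 0 hU0 i j)
  set K : Matrix (Fin m) (Fin m) ℝ :=
    Matrix.of (fun i j => deriv (fun r => (h r)⁻¹ i j) 0) with hKdef
  have hK : ∀ i j, HasDerivAt (fun r => (h r)⁻¹ i j) (K i j) 0 :=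
    fun i j => (hJd i j).hasDerivAt
  -- good neighbourhood
  have hVev : ∀ᶠ r in 𝓝 0, r ∈ U ∧ 0 < (h r).det ∧ 0 < 1 + r * φ r := by
    have h1 : ∀ᶠ r in 𝓝 0, r ∈ U := hUo.eventually_mem hU0
    have hDc : ContinuousAt (fun r => (h r).det) 0 := (hDd 0 hU0).continuousAt
    have h2 : ∀ᶠ r in 𝓝 0, 0 < (h r).det := hDc.eventually (eventually_gt_nhds hdet)
    have hqc : ContinuousAt (fun r => 1 + r * φ r) 0 :=
      continuousAt_const.add (continuousAt_id.mul (hφd 0 hU0).continuousAt)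
    have h3 : ∀ᶠ r in 𝓝 0, 0 < 1 + r * φ r := by
      have : (0:ℝ) < 1 + 0 * φ 0 := by norm_num
      exact hqc.eventually (eventually_gt_nhds this)
    filter_upwards [h1, h2, h3] with r ha hb hc'
    exact ⟨ha, hb, hc'⟩
  -- derivative of det in trace-inverse form
  have hDF : ∀ r, r ∈ U → 0 < (h r).det →
      HasDerivAt (fun t => (h t).det)
        ((h r).det * Matrix.trace ((h r)⁻¹ * h' r)) r := by
    intro r hr hdr
    have hthis := hDd r hr
    have hadj : (h r).adjugate = (h r).det • (h r)⁻¹ := by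
      rw [Matrix.inv_def, smul_smul, Ring.inverse_eq_inv,
        mul_inv_cancel₀ (ne_of_gt hdr), one_smul]
    rw [hadj, Matrix.smul_mul, Matrix.trace_smul, smul_eq_mul] at hthis
    exact hthis
  -- derivative of G on the good set
  have hGdAt : ∀ r, r ∈ U → 0 < (h r).det → 0 < 1 + r * φ r →
      HasDerivAt (fun r => ((1 + r * φ r) ^ (n + 1))⁻¹ * Real.sqrt ((h r).det / (h 0).det))
        (-(((n + 1 : ℕ) : ℝ) * (1 + r * φ r) ^ (n + 1 - 1) * (1 * φ r + r * φ' r))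
            / ((1 + r * φ r) ^ (n + 1)) ^ 2 * Real.sqrt ((h r).det / (h 0).det)
          + ((1 + r * φ r) ^ (n + 1))⁻¹
            * (1 / (2 * Real.sqrt ((h r).det / (h 0).det))
              * ((h r).det * Matrix.trace ((h r)⁻¹ * h' r) / (h 0).det))) r := by
    intro r hr h1 h2
    have hid : HasDerivAt (fun x : ℝ => x) 1 r := hasDerivAt_id r
    have hq : HasDerivAt (fun r => 1 + r * φ r) (1 * φ r + r * φ' r) r :=
      (hid.mul (hφd r hr)).const_add 1
    have hpinv : HasDerivAt (fun r => ((1 + r * φ r) ^ (n + 1))⁻¹)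
        (-(((n + 1 : ℕ) : ℝ) * (1 + r * φ r) ^ (n + 1 - 1) * (1 * φ r + r * φ' r))
          / ((1 + r * φ r) ^ (n + 1)) ^ 2) r :=
      (hq.pow (n + 1)).inv (pow_ne_zero _ (ne_of_gt h2))
    have hDdiv : HasDerivAt (fun t => (h t).det / (h 0).det)
        ((h r).det * Matrix.trace ((h r)⁻¹ * h' r) / (h 0).det) r :=
      (hDF r hr h1).div_const _
    have hsq : HasDerivAt (fun t => Real.sqrt ((h t).det / (h 0).det))
        (1 / (2 * Real.sqrt ((h r).det / (h 0).det))
          * ((h r).det * Matrix.trace ((h r)⁻¹ * h' r) / (h 0).det)) r := by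
      have hpos : (0:ℝ) < (h r).det / (h 0).det := div_pos h1 hdet
      convert hDdiv.sqrt (ne_of_gt hpos) using 1
      ring
    exact hpinv.mul hsq

  -- pin down K : h' 0 * (h 0)⁻¹ + h 0 * K = 0
  have hinv1 : (h 0)⁻¹ * h 0 = 1 := Matrix.nonsing_inv_mul _ hUnit
  have hKpin : h' 0 * (h 0)⁻¹ + h 0 * K = 0 := by
    ext i j
    have hev : (fun r => ∑ l, h r i l * (h r)⁻¹ l j)
        =ᶠ[𝓝 0] fun _ => (1 : Matrix (Fin m) (Fin m) ℝ) i j := by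
      filter_upwards [hVev] with r hr
      have hone : h r * (h r)⁻¹ = 1 :=
        Matrix.mul_nonsing_inv _ (isUnit_iff_ne_zero.mpr (ne_of_gt hr.2.1))
      calc (∑ l, h r i l * (h r)⁻¹ l j) = (h r * (h r)⁻¹) i j := (Matrix.mul_apply).symm
        _ = (1 : Matrix (Fin m) (Fin m) ℝ) i j := by rw [hone]
    have hder : HasDerivAt (fun r => ∑ l, h r i l * (h r)⁻¹ l j)
        (∑ l, (h' 0 i l * (h 0)⁻¹ l j + h 0 i l * K l j)) 0 :=
      HasDerivAt.fun_sum fun l _ => (hd 0 hU0 i l).mul (hK l j)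
    have hsum : (∑ l, (h' 0 i l * (h 0)⁻¹ l j + h 0 i l * K l j)) = 0 := by
      rw [← hder.deriv, hev.deriv_eq, deriv_const]
    simpa [Matrix.add_apply, Matrix.mul_apply, Matrix.zero_apply,
      Finset.sum_add_distrib] using hsum
  have hKval : K = -((h 0)⁻¹ * h' 0 * (h 0)⁻¹) := by
    have h1 : h 0 * K = -(h' 0 * (h 0)⁻¹) := eq_neg_of_add_eq_zero_right hKpin
    calc K = 1 * K := (one_mul K).symm
      _ = ((h 0)⁻¹ * h 0) * K := by rw [hinv1]
      _ = (h 0)⁻¹ * (h 0 * K) := Matrix.mul_assoc _ _ _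
      _ = (h 0)⁻¹ * -(h' 0 * (h 0)⁻¹) := by rw [h1]
      _ = -((h 0)⁻¹ * h' 0 * (h 0)⁻¹) := by rw [Matrix.mul_neg, Matrix.mul_assoc]
  -- trace values
  have hT1 : Matrix.trace ((h 0)⁻¹ * h' 0) = -2 * H := by
    rw [hL, Matrix.mul_smul, Matrix.trace_smul, hH, smul_eq_mul]
  have hσ' : Matrix.trace ((h 0)⁻¹ * L * ((h 0)⁻¹ * L)) = σ := by
    rw [hσ, pow_two]
  have e1 : Matrix.trace (K * h' 0) = -4 * σ := by
    rw [hKval, hL]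
    have key0 : (h 0)⁻¹ * ((-2:ℝ) • L) * (h 0)⁻¹ * ((-2:ℝ) • L)
        = (4:ℝ) • ((h 0)⁻¹ * L * ((h 0)⁻¹ * L)) := by
      simp only [Matrix.mul_smul, Matrix.smul_mul, smul_smul, Matrix.mul_assoc]
      norm_num
    have key : -((h 0)⁻¹ * ((-2:ℝ) • L) * (h 0)⁻¹) * ((-2:ℝ) • L)
        = (-4:ℝ) • ((h 0)⁻¹ * L * ((h 0)⁻¹ * L)) := by
      rw [Matrix.neg_mul, key0, ← neg_smul]
    rw [key, Matrix.trace_smul, hσ', smul_eq_mul]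
  have e2 : Matrix.trace ((h 0)⁻¹ * h'' 0) = -(ρb - R - σ + H ^ 2) + 2 * σ := by
    rw [hW, Matrix.mul_add, Matrix.trace_add, Matrix.mul_smul, Matrix.mul_smul,
      Matrix.trace_smul, Matrix.trace_smul, hGauss]
    have hre : (h 0)⁻¹ * (L * (h 0)⁻¹ * L) = (h 0)⁻¹ * L * ((h 0)⁻¹ * L) := by
      simp only [← Matrix.mul_assoc]
    rw [hre, hσ', smul_eq_mul, smul_eq_mul]
    ring
  -- derivative of trace((h r)⁻¹ h' r) at 0
  have htr : (fun r => Matrix.trace ((h r)⁻¹ * h' r))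
      = fun r => ∑ i, ∑ l, (h r)⁻¹ i l * h' r l i := by
    funext r; simp [Matrix.trace, Matrix.mul_apply, Matrix.diag]
  have hF0 : HasDerivAt (fun r => Matrix.trace ((h r)⁻¹ * h' r))
      (∑ i, ∑ l, (K i l * h' 0 l i + (h 0)⁻¹ i l * h'' 0 l i)) 0 := by
    rw [htr]
    exact HasDerivAt.fun_sum fun i _ => HasDerivAt.fun_sum fun l _ => (hK i l).mul (hd' 0 hU0 l i)
  have hT2 : (∑ i, ∑ l, (K i l * h' 0 l i + (h 0)⁻¹ i l * h'' 0 l i))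
      = R - ρb - σ - H ^ 2 := by
    have hsplit : (∑ i, ∑ l, (K i l * h' 0 l i + (h 0)⁻¹ i l * h'' 0 l i))
        = Matrix.trace (K * h' 0) + Matrix.trace ((h 0)⁻¹ * h'' 0) := by
      simp [Matrix.trace, Matrix.diag, Matrix.mul_apply, Finset.sum_add_distrib]
    rw [hsplit, e1, e2]
    ring
  -- HasDerivAt of the pieces at 0
  have hq0ne : (1:ℝ) + 0 * φ 0 ≠ 0 := by norm_num
  have hid0 : HasDerivAt (fun x : ℝ => x) 1 (0:ℝ) := hasDerivAt_id 0
  have hq0 : HasDerivAt (fun r => 1 + r * φ r) (1 * φ 0 + 0 * φ' 0) 0 :=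
    (hid0.mul (hφd 0 hU0)).const_add 1
  have hqq0 : HasDerivAt (fun r => 1 * φ r + r * φ' r)
      (1 * φ' 0 + (1 * φ' 0 + 0 * φ'' 0)) 0 :=
    ((hφd 0 hU0).const_mul 1).add (hid0.mul (hφd' 0 hU0))
  have hD0' : HasDerivAt (fun t => (h t).det)
      ((h 0).det * Matrix.trace ((h 0)⁻¹ * h' 0)) 0 := hDF 0 hU0 hdet
  have hsq0 : HasDerivAt (fun t => Real.sqrt ((h t).det / (h 0).det))
      (1 / (2 * Real.sqrt ((h 0).det / (h 0).det))
        * ((h 0).det * Matrix.trace ((h 0)⁻¹ * h' 0) / (h 0).det)) 0 := by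
    have hDdiv : HasDerivAt (fun t => (h t).det / (h 0).det)
        ((h 0).det * Matrix.trace ((h 0)⁻¹ * h' 0) / (h 0).det) 0 :=
      (hDF 0 hU0 hdet).div_const _
    have hpos : (0:ℝ) < (h 0).det / (h 0).det := div_pos hdet hdet
    convert hDdiv.sqrt (ne_of_gt hpos) using 1
    ring
  have hsd0 : Real.sqrt ((h 0).det / (h 0).det) = 1 := by
    rw [div_self hdet', Real.sqrt_one]
  have hs2ne : 2 * Real.sqrt ((h 0).det / (h 0).det) ≠ 0 := by
    rw [hsd0]; norm_num
  -- assemble derivative of the big function at 0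
  have hBig := ((((((hq0.pow (n + 1 - 1)).const_mul (((n + 1 : ℕ)) : ℝ)).mul hqq0).neg.div
      ((hq0.pow (n + 1)).pow 2)
      (pow_ne_zero _ (pow_ne_zero _ hq0ne))).mul hsq0).add
    (((hq0.pow (n + 1)).inv (pow_ne_zero _ hq0ne)).mul
      (((hasDerivAt_const (0:ℝ) (1:ℝ)).div (hsq0.const_mul 2) hs2ne).mul
        ((hD0'.mul hF0).div_const ((h 0).det)))))
  have hBig' : HasDerivAt
      (fun r =>
        -(((n + 1 : ℕ) : ℝ) * (1 + r * φ r) ^ (n + 1 - 1) * (1 * φ r + r * φ' r))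
            / ((1 + r * φ r) ^ (n + 1)) ^ 2 * Real.sqrt ((h r).det / (h 0).det)
          + ((1 + r * φ r) ^ (n + 1))⁻¹
            * (1 / (2 * Real.sqrt ((h r).det / (h 0).det))
              * ((h r).det * Matrix.trace ((h r)⁻¹ * h' r) / (h 0).det)))
      (((n:ℝ) + 1) * (((n:ℝ) + 2) * (φ 0) ^ 2 - 2 * φ' 0)
        + 2 * ((n:ℝ) + 1) * (φ 0) * H + H ^ 2 + (R - ρb - σ - H ^ 2) / 2) 0 := by
    refine hBig.congr_deriv (Eq.symm ?_)
    simp only [Pi.mul_apply, Pi.pow_apply, Pi.neg_apply, Pi.div_apply, Pi.inv_apply, Pi.add_apply]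
    simp only [hT1, hT2, hsd0, Nat.add_sub_cancel]
    push_cast
    simp only [zero_mul, mul_zero, add_zero, zero_add, one_mul, mul_one, one_pow]
    field_simp
    ring
  rw [hG]
  have hEv : deriv (fun r => ((1 + r * φ r) ^ (n + 1))⁻¹ * Real.sqrt ((h r).det / (h 0).det))
      =ᶠ[𝓝 0] fun r =>
        -(((n + 1 : ℕ) : ℝ) * (1 + r * φ r) ^ (n + 1 - 1) * (1 * φ r + r * φ' r))
            / ((1 + r * φ r) ^ (n + 1)) ^ 2 * Real.sqrt ((h r).det / (h 0).det)
          + ((1 + r * φ r) ^ (n + 1))⁻¹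
            * (1 / (2 * Real.sqrt ((h r).det / (h 0).det))
              * ((h r).det * Matrix.trace ((h r)⁻¹ * h' r) / (h 0).det)) := by
    filter_upwards [hVev] with r hr
    exact (hGdAt r hr.1 hr.2.1 hr.2.2).deriv
  rw [hEv.deriv_eq, hBig'.deriv]
  have hσ2 : σ = σc + H ^ 2 / (n:ℝ) := by rw [hσc]; ring
  rw [hφ0, hφ1, hσ2]
  field_simp
  ring
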